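/- In a group generated by elements satisfying the relations π_m² = 1 for all m ≥ 0, π_m π_q = π_q π_m whenever |m − q| ≥ 2, and π_m π_{m+1} π_m = π_{m+1} π_m π_{m+1} for all m ≥ 0, the corresponding elements in the homeomorphism group of 𝔠ⁿ defined by π_m = (0^m prefix applied to the transposition ⟨(01,ε,…,ε),(1,ε,…,ε)⟩) — i.e., π_m is the transposition exchanging Γ(0^m 01, ε,…,ε) and Γ(0^m 1, ε,…,ε) — indeed satisfy all three families of relations. -/
import Mathlib


open scoped Classical

/-- Finite words over the alphabet `{0,1}`. -/
abbrev Word := List Bool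
/-- Cantor space: infinite `{0,1}`-sequences. -/
abbrev Cantor := ℕ → Bool

/-- Concatenate a finite word with an infinite sequence. -/
def catW (α : Word) (w : Cantor) : Cantor :=
  fun i => if h : i < α.length then α.get ⟨i, h⟩ else w (i - α.length)

/-- The basic open set of sequences having `α` as a prefix. -/
def GammaW (α : Word) : Set Cantor := Set.range (catW α)

/-- Incomparability of words: neither is a prefix of the other. -/
def IncompW (α β : Word) : Prop := ¬ α <+: β ∧ ¬ β <+: α

/-- Addresses: `n`-tuples of finite words. -/
abbrev Addr (n : ℕ) := Fin n → Word
/-- `n`-dimensional Cantor space. -/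
abbrev CantorN (n : ℕ) := Fin n → Cantor

/-- The basic open set in `𝔠ⁿ` indexed by the address `α`. -/
def GammaN {n : ℕ} (α : Addr n) : Set (CantorN n) :=
  { w | ∀ d, w d ∈ GammaW (α d) }

/-- Incomparability of addresses: some coordinate pair is incomparable. -/
def IncompA {n : ℕ} (α β : Addr n) : Prop := ∃ d, IncompW (α d) (β d)

/-- Drop the first `k` symbols of an infinite sequence. -/
def dropSeq (k : ℕ) (w : Cantor) : Cantor := fun i => w (i + k)

/-- Prepend the address `α` coordinatewise. -/
def catA {n : ℕ} (α : Addr n) (u : CantorN n) : CantorN n :=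
  fun d => catW (α d) (u d)

/-- Remove the prefix `α` coordinatewise. -/
def dropA {n : ℕ} (α : Addr n) (w : CantorN n) : CantorN n :=
  fun d => dropSeq ((α d).length) (w d)

/-- The transposition `⟨α β⟩` of `𝔠ⁿ`: exchanges `Γ(α)` and `Γ(β)` by prefix
substitution and fixes all other points. -/
noncomputable def swapN {n : ℕ} (α β : Addr n) : CantorN n → CantorN n :=
  fun w =>
    if w ∈ GammaN α then catA β (dropA α w)
    else if w ∈ GammaN β then catA α (dropA β w)
    else w

/-- Append the symbol `x` to the `d`-th coordinate of the address `α`. -/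
def appA {n : ℕ} (α : Addr n) (d : Fin n) (x : Bool) : Addr n :=
  Function.update α d (α d ++ [x])

/-- Append the word `u` to the `d`-th coordinate of the address `α`. -/
def appW {n : ℕ} (α : Addr n) (d : Fin n) (u : Word) : Addr n :=
  Function.update α d (α d ++ u)

/-- Coordinatewise concatenation of addresses. -/
def concatA {n : ℕ} (α η : Addr n) : Addr n := fun d => α d ++ η d

/-- The address with word `u` in coordinate `d` and empty words elsewhere. -/
def unitA {n : ℕ} (d : Fin n) (u : Word) : Addr n :=
  fun e => if e = d then u else []

/-- Prepend a letter to an infinite sequence. -/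
def consSeq (b : Bool) (w : Cantor) : Cantor :=
  fun i => match i with
  | 0 => b
  | i + 1 => w i

/-- The full-support baker's map: moves the first letter of coordinate `1`
to the front of coordinate `d`. -/
def bakerFull {n : ℕ} [NeZero n] (d : Fin n) : CantorN n → CantorN n :=
  fun w e =>
    if e = 0 then dropSeq 1 (w 0)
    else if e = d then consSeq (w 0 0) (w d)
    else w e

/-- The inverse of the full-support baker's map: moves the first letter of
coordinate `d` to the front of coordinate `1`. -/
def invBakerFull {n : ℕ} [NeZero n] (d : Fin n) : CantorN n → CantorN n :=
  fun w e =>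
    if e = 0 then consSeq (w d 0) (w 0)
    else if e = d then dropSeq 1 (w d)
    else w e

/-- The index-`d` baker's map with support `Γ(α)`: sends `α.x₁.u ↦ α.x_d.u`
and fixes all points outside `Γ(α)`. -/
noncomputable def bakerN {n : ℕ} [NeZero n] (d : Fin n) (α : Addr n) :
    CantorN n → CantorN n :=
  fun w => if w ∈ GammaN α then catA α (bakerFull d (dropA α w)) else w

/-- The inverse of the index-`d` baker's map with support `Γ(α)`. -/
noncomputable def invBakerN {n : ℕ} [NeZero n] (d : Fin n) (α : Addr n) :
    CantorN n → CantorN n :=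
  fun w => if w ∈ GammaN α then catA α (invBakerFull d (dropA α w)) else w

/-- The partial prefix-substitution action of the symbol `⟨γ δ⟩` on addresses,
as a relation: `ActRel γ δ ζ ζ'` holds iff `ζ • ⟨γ δ⟩` is defined and
equals `ζ'`. -/
def ActRel {n : ℕ} (γ δ ζ ζ' : Addr n) : Prop :=
  (∃ η, ζ = concatA γ η ∧ ζ' = concatA δ η) ∨
  (∃ η, ζ = concatA δ η ∧ ζ' = concatA γ η) ∨
  (IncompA ζ γ ∧ IncompA ζ δ ∧ ζ' = ζ)

/-! ### Auxiliary one-dimensional analysis -/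

/-- The word `0^j 1`. -/
def Aw (j : ℕ) : Word := List.replicate j false ++ [true]

/-- The sequence `0^j 1 t`. -/
def seqA (k : ℕ) (t : Cantor) : Cantor := catW (Aw k) t

/-- The all-zero sequence. -/
def allF : Cantor := fun _ => false

/-- The one-dimensional prefix swap. -/
noncomputable def swap1 (a b : Word) (w : Cantor) : Cantor :=
  if w ∈ GammaW a then catW b (dropSeq a.length w)
  else if w ∈ GammaW b then catW a (dropSeq b.length w)
  else w

lemma Aw_length (j : ℕ) : (Aw j).length = j + 1 := by simp [Aw]

lemma seqA_lt (k : ℕ) (t : Cantor) {i : ℕ} (h : i < k) : seqA k t i = false := by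
  have hi : i < (Aw k).length := by rw [Aw_length]; omega
  simp only [seqA, catW, dif_pos hi, List.get_eq_getElem]
  simp only [Aw]
  rw [List.getElem_append_left (by simpa using h)]
  simp

lemma seqA_self (k : ℕ) (t : Cantor) : seqA k t k = true := by
  have hi : k < (Aw k).length := by rw [Aw_length]; omega
  simp only [seqA, catW, dif_pos hi, List.get_eq_getElem]
  simp only [Aw]
  rw [List.getElem_append_right (by simp)]
  simp

lemma seqA_gt (k : ℕ) (t : Cantor) (i : ℕ) : seqA k t (i + (k + 1)) = t i := by
  simp only [seqA, catW, Aw_length]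
  rw [dif_neg (by omega : ¬ (i + (k + 1) < k + 1))]
  congr 1; omega

lemma seqA_inj {j k : ℕ} {t t' : Cantor} (h : seqA j t = seqA k t') :
    j = k ∧ t = t' := by
  have hjk : j = k := by
    by_contra hne
    rcases Nat.lt_or_ge j k with hlt | hge
    · have := congrFun h j
      rw [seqA_self, seqA_lt _ _ hlt] at this
      exact Bool.noConfusion this
    · have hlt : k < j := lt_of_le_of_ne hge (fun hh => hne hh.symm)
      have := congrFun h k
      rw [seqA_lt _ _ hlt, seqA_self] at this
      exact Bool.noConfusion this
  subst hjk
  refine ⟨rfl, funext fun i => ?_⟩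
  have := congrFun h (i + (j + 1))
  rwa [seqA_gt, seqA_gt] at this

lemma mem_GammaW_Aw {w : Cantor} {j : ℕ} :
    w ∈ GammaW (Aw j) ↔ ∃ t, w = seqA j t := by
  constructor
  · rintro ⟨t, rfl⟩; exact ⟨t, rfl⟩
  · rintro ⟨t, rfl⟩; exact ⟨t, rfl⟩

lemma allF_notMem (j : ℕ) : allF ∉ GammaW (Aw j) := by
  rw [mem_GammaW_Aw]
  rintro ⟨t, h⟩
  have := congrFun h j
  rw [seqA_self] at this
  simp [allF] at this

lemma drop_seqA (j : ℕ) (t : Cantor) :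
    dropSeq ((Aw j).length) (seqA j t) = t := by
  funext i
  simp only [dropSeq, Aw_length]
  exact seqA_gt j t i

lemma swap1_seqA (j l k : ℕ) (t : Cantor) :
    swap1 (Aw j) (Aw l) (seqA k t) =
      seqA (if k = j then l else if k = l then j else k) t := by
  unfold swap1
  by_cases hj : k = j
  · subst hj
    rw [if_pos (mem_GammaW_Aw.mpr ⟨t, rfl⟩), drop_seqA, if_pos rfl]
    rfl
  · rw [if_neg (fun hm => hj (seqA_inj (mem_GammaW_Aw.mp hm).choose_spec).1),
      if_neg hj]
    by_cases hl : k = l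
    · subst hl
      rw [if_pos (mem_GammaW_Aw.mpr ⟨t, rfl⟩), drop_seqA, if_pos rfl]
      rfl
    · rw [if_neg (fun hm => hl (seqA_inj (mem_GammaW_Aw.mp hm).choose_spec).1),
        if_neg hl]

lemma swap1_allF (j l : ℕ) : swap1 (Aw j) (Aw l) allF = allF := by
  unfold swap1
  rw [if_neg (allF_notMem j), if_neg (allF_notMem l)]

lemma cantor_cases (w : Cantor) : w = allF ∨ ∃ k t, w = seqA k t := by
  by_cases h : ∃ i, w i = true
  · right
    refine ⟨Nat.find h, dropSeq (Nat.find h + 1) w, funext fun i => ?_⟩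
    rcases lt_trichotomy i (Nat.find h) with hi | hi | hi
    · rw [seqA_lt _ _ hi]
      have := Nat.find_min h hi
      simpa using this
    · rw [hi, seqA_self]
      exact Nat.find_spec h
    · obtain ⟨m, rfl⟩ : ∃ m, i = m + (Nat.find h + 1) := ⟨i - (Nat.find h + 1), by omega⟩
      rw [seqA_gt]
      rfl
  · left
    funext i
    simp only [allF]
    exact Bool.eq_false_iff.mpr (fun ht => h ⟨i, ht⟩)

lemma catW_nil (t : Cantor) : catW [] t = t := by
  funext i; simp [catW]

lemma dropSeq_zero (t : Cantor) : dropSeq 0 t = t := rfl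

lemma mem_GammaN_unit {n : ℕ} [NeZero n] (a : Word) (w : CantorN n) :
    w ∈ GammaN (unitA 0 a) ↔ w 0 ∈ GammaW a := by
  constructor
  · intro h
    simpa [unitA] using h 0
  · intro h d
    by_cases hd : d = 0
    · subst hd; simpa [unitA] using h
    · simp only [unitA, if_neg hd]
      exact ⟨w d, catW_nil _⟩

lemma swapN_unit {n : ℕ} [NeZero n] (a b : Word) (w : CantorN n) :
    swapN (unitA 0 a) (unitA 0 b) w = Function.update w 0 (swap1 a b (w 0)) := by
  unfold swapN swap1
  by_cases ha : w 0 ∈ GammaW a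
  · rw [if_pos ((mem_GammaN_unit a w).mpr ha), if_pos ha]
    funext d
    by_cases hd : d = 0
    · subst hd
      simp [catA, dropA, unitA]
    · simp [catA, dropA, unitA, hd, Function.update_of_ne hd, catW_nil, dropSeq_zero]
  · rw [if_neg (fun h => ha ((mem_GammaN_unit a w).mp h)), if_neg ha]
    by_cases hb : w 0 ∈ GammaW b
    · rw [if_pos ((mem_GammaN_unit b w).mpr hb), if_pos hb]
      funext d
      by_cases hd : d = 0
      · subst hd
        simp [catA, dropA, unitA]
      · simp [catA, dropA, unitA, hd, Function.update_of_ne hd, catW_nil, dropSeq_zero]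
    · rw [if_neg (fun h => hb ((mem_GammaN_unit b w).mp h)), if_neg hb,
        Function.update_eq_self]

set_option maxHeartbeats 2000000 in
/-- The homeomorphisms π_m = ⟨(0^m01,ε,…,ε) (0^m1,ε,…,ε)⟩ of `𝔠ⁿ` satisfy the
symmetric-group relations: π_m² = 1, π_m π_q = π_q π_m for |m − q| ≥ 2, and
the braid relations π_m π_{m+1} π_m = π_{m+1} π_m π_{m+1}. -/
theorem stmt17 (n : ℕ) [NeZero n] (hn : 2 ≤ n)
    (π : ℕ → CantorN n → CantorN n)
    (hπ : ∀ m, π m = swapN (unitA 0 (List.replicate m false ++ [false, true]))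
                          (unitA 0 (List.replicate m false ++ [true]))) :
    (∀ m, π m ∘ π m = id) ∧
    (∀ m q, m + 2 ≤ q ∨ q + 2 ≤ m → π m ∘ π q = π q ∘ π m) ∧
    (∀ m, π m ∘ π (m + 1) ∘ π m = π (m + 1) ∘ π m ∘ π (m + 1)) := by
  have hA : ∀ m : ℕ, List.replicate m false ++ [false, true] = Aw (m + 1) := by
    intro m
    show _ = List.replicate (m + 1) false ++ [true]
    rw [List.replicate_succ']
    simp
  have hπ' : ∀ m (w : CantorN n),
      π m w = Function.update w 0 (swap1 (Aw (m + 1)) (Aw m) (w 0)) := by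
    intro m w
    have hA2 : List.replicate m false ++ [true] = Aw m := rfl
    rw [hπ m, hA m, hA2]
    exact swapN_unit _ _ w
  have h1 : ∀ m u, swap1 (Aw (m + 1)) (Aw m) (swap1 (Aw (m + 1)) (Aw m) u) = u := by
    intro m u
    rcases cantor_cases u with rfl | ⟨k, t, rfl⟩
    · rw [swap1_allF, swap1_allF]
    · rw [swap1_seqA, swap1_seqA]
      refine congrArg (fun x => seqA x t) ?_
      split_ifs <;> omega
  have h2 : ∀ m q, (m + 2 ≤ q ∨ q + 2 ≤ m) → ∀ u,
      swap1 (Aw (m + 1)) (Aw m) (swap1 (Aw (q + 1)) (Aw q) u)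
        = swap1 (Aw (q + 1)) (Aw q) (swap1 (Aw (m + 1)) (Aw m) u) := by
    intro m q hq u
    rcases cantor_cases u with rfl | ⟨k, t, rfl⟩
    · simp only [swap1_allF]
    · simp only [swap1_seqA]
      refine congrArg (fun x => seqA x t) ?_
      split_ifs <;> omega
  have h3 : ∀ m u,
      swap1 (Aw (m + 1)) (Aw m)
        (swap1 (Aw (m + 2)) (Aw (m + 1)) (swap1 (Aw (m + 1)) (Aw m) u))
      = swap1 (Aw (m + 2)) (Aw (m + 1))
          (swap1 (Aw (m + 1)) (Aw m) (swap1 (Aw (m + 2)) (Aw (m + 1)) u)) := by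
    intro m u
    rcases cantor_cases u with rfl | ⟨k, t, rfl⟩
    · simp only [swap1_allF]
    · simp only [swap1_seqA]
      refine congrArg (fun x => seqA x t) ?_
      split_ifs <;> omega
  refine ⟨?_, ?_, ?_⟩
  · intro m
    funext w
    simp only [Function.comp_apply, hπ', id_eq, Function.update_self,
      Function.update_idem, h1, Function.update_eq_self]
  · intro m q hq
    funext w
    simp only [Function.comp_apply, hπ', Function.update_self,
      Function.update_idem]
    rw [h2 m q hq]
  · intro m
    funext w
    simp only [Function.comp_apply, hπ', Function.update_self,
      Function.update_idem]
    rw [h3 m]
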